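/- arXiv:1402.6281 — 8 statements merged into one kernel-verified Lean document; each statement's English description precedes it below -/
import Mathlib

section
/- If T is a monad on C whose Kleisli category Kl(T) is Cppo-enriched and S̄ : Kl(T) → Kl(T) is a locally continuous lifting of S : C → C carrying a monad structure on Kl(T), then the Kleisli category Kl(TS) = Kl(S̄) is Cppo-enriched. -/
/-!
STATEMENT 4: If `T` is a monad on `C` whose Kleisli category `Kl(T)` is Cppo-enriched
and `S̄ : Kl(T) → Kl(T)` is a locally continuous lifting of `S : C → C` carrying a monad
structure on `Kl(T)`, then the Kleisli category `Kl(TS) = Kl(S̄)` is Cppo-enriched.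

Hom-sets of `Kl(S̄)` are the hom-sets `X ⟶ S̄Y` of `Kl(T)`, so they are pointed ω-cpos;
the content is that Kleisli composition for `S̄`, `g·f = μ^{S̄} ∘ S̄(g) ∘ f`, i.e.
`f ≫ S̄.map g ≫ S̄.μ`, is monotone and ω-continuous in each argument and the bottoms are
inherited.
-/

open CategoryTheory OmegaCompletePartialOrder

variable {C : Type*} [Category C] (T : Monad C)

theorem kleisli_of_lifted_monad_is_cppo_enriched
    [∀ X Y : Kleisli T, OmegaCompletePartialOrder (X ⟶ Y)]
    [∀ X Y : Kleisli T, OrderBot (X ⟶ Y)]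
    -- `Kl(T)` is Cppo-enriched: composition is monotone and ω-continuous on both sides
    (hpost : ∀ {X Y Z : Kleisli T} (f : X ⟶ Y), Monotone (fun g : Y ⟶ Z => f ≫ g))
    (hpre : ∀ {X Y Z : Kleisli T} (g : Y ⟶ Z), Monotone (fun f : X ⟶ Y => f ≫ g))
    (hpostCont : ∀ {X Y Z : Kleisli T} (f : X ⟶ Y) (c : Chain (Y ⟶ Z)),
      f ≫ ωSup c = ωSup (c.map ⟨fun g => f ≫ g, hpost f⟩))
    (hpreCont : ∀ {X Y Z : Kleisli T} (g : Y ⟶ Z) (c : Chain (X ⟶ Y)),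
      ωSup c ≫ g = ωSup (c.map ⟨fun f => f ≫ g, hpre g⟩))
    -- a monad `S̄` on `Kl(T)` …
    (S' : Monad (Kleisli T))
    -- … which is locally monotone and locally continuous
    (hmono : ∀ {X Y : Kleisli T}, Monotone (fun f : X ⟶ Y => S'.map f))
    (hcont : ∀ {X Y : Kleisli T} (c : Chain (X ⟶ Y)),
      S'.map (ωSup c) = ωSup (c.map ⟨fun f => S'.map f, hmono⟩))
    -- … and which is a lifting of a functor `S : C ⥤ C`
    (S : C ⥤ C)
    (hlift : Kleisli.Adjunction.toKleisli T ⋙ S'.toFunctor =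
      S ⋙ Kleisli.Adjunction.toKleisli T) :
    -- then `Kl(S̄)` is Cppo-enriched: its composition
    -- `g·f = f ≫ S̄.map g ≫ S̄.μ` is monotone and ω-continuous in each argument
    -- (its hom-sets are hom-sets of `Kl(T)`, hence pointed ω-cpos)
    (∀ {X Y Z : Kleisli T} (f : X ⟶ S'.obj Y),
      ∃ hm : Monotone (fun g : Y ⟶ S'.obj Z => f ≫ S'.map g ≫ S'.μ.app Z),
        ∀ c : Chain (Y ⟶ S'.obj Z),
          f ≫ S'.map (ωSup c) ≫ S'.μ.app Z =
            ωSup (c.map ⟨fun g => f ≫ S'.map g ≫ S'.μ.app Z, hm⟩)) ∧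
    (∀ {X Y Z : Kleisli T} (g : Y ⟶ S'.obj Z),
      ∃ hm : Monotone (fun f : X ⟶ S'.obj Y => f ≫ S'.map g ≫ S'.μ.app Z),
        ∀ c : Chain (X ⟶ S'.obj Y),
          ωSup c ≫ S'.map g ≫ S'.μ.app Z =
            ωSup (c.map ⟨fun f => f ≫ S'.map g ≫ S'.μ.app Z, hm⟩)) := by
  constructor
  · intro X Y Z f
    have hm : Monotone (fun g : Y ⟶ S'.obj Z => f ≫ S'.map g ≫ S'.μ.app Z) := by
      intro a b hab
      exact hpost f (hpre (S'.μ.app Z) (hmono hab))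
    refine ⟨hm, fun c => ?_⟩
    rw [hcont, hpreCont, hpostCont]
    congr 1
  · intro X Y Z g
    have hm : Monotone (fun f : X ⟶ S'.obj Y => f ≫ S'.map g ≫ S'.μ.app Z) :=
      fun a b hab => hpre _ hab
    refine ⟨hm, fun c => ?_⟩
    rw [hpreCont]
end

section
/- Let T be a monad whose Kleisli category Kl(T) has zero morphisms, and let F̄ be a lifting to Kl(T) of a functor F : C → C. Then the functor F̄_τ = F̄ + Id on Kl(T) is a monad with unit e'_X = ι² : X ⊸ F̄X + X and multiplication m'_X = [ι¹, id] ∘ (F̄([0,id]) + id) : F̄(F̄+Id)X + (F̄+Id)X ⊸ F̄X + X. -/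
/-!
STATEMENT 5: Let `T` be a monad whose Kleisli category `Kl(T)` has zero morphisms, and
let `F̄` be a lifting to `Kl(T)` of a functor `F : C ⥤ C`.  Then the functor
`F̄_τ = F̄ + Id` on `Kl(T)` is a monad with unit `e'_X = ι² : X ⊸ F̄X + X` and
multiplication `m'_X = [ι¹, id] ∘ (F̄([0,id]) + id) : F̄(F̄+Id)X + (F̄+Id)X ⊸ F̄X + X`:
`e'` and `m'` are natural and satisfy the monad unit laws and associativity.
-/

open CategoryTheory CategoryTheory.Limits

variable {C : Type*} [Category C] (T : Monad C)
  [HasBinaryCoproducts (Kleisli T)] [HasZeroMorphisms (Kleisli T)]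

/-- The functor `F̄_τ = F̄ + Id` on `Kl(T)`. -/
@[simps]
noncomputable def Ftau (F' : Kleisli T ⥤ Kleisli T) : Kleisli T ⥤ Kleisli T where
  obj X := F'.obj X ⨿ X
  map f := coprod.map (F'.map f) f

/-- The unit `e'_X = ι²`. -/
noncomputable def FtauUnit (F' : Kleisli T ⥤ Kleisli T) (X : Kleisli T) : X ⟶ (Ftau T F').obj X :=
  coprod.inr

/-- The multiplication `m'_X = [ι¹, id] ∘ (F̄([0,id]) + id)`. -/
noncomputable def FtauMul (F' : Kleisli T ⥤ Kleisli T) (X : Kleisli T) :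
    (Ftau T F').obj ((Ftau T F').obj X) ⟶ (Ftau T F').obj X :=
  coprod.map (F'.map (coprod.desc 0 (𝟙 X))) (𝟙 ((Ftau T F').obj X)) ≫
    coprod.desc coprod.inl (𝟙 ((Ftau T F').obj X))

theorem Ftau_is_monad
    (F : C ⥤ C) (F' : Kleisli T ⥤ Kleisli T)
    -- `F̄` is a lifting of `F`
    (hlift : Kleisli.Adjunction.toKleisli T ⋙ F' = F ⋙ Kleisli.Adjunction.toKleisli T) :
    -- naturality of `e'`
    (∀ {X Y : Kleisli T} (f : X ⟶ Y),
      f ≫ FtauUnit T F' Y = FtauUnit T F' X ≫ (Ftau T F').map f) ∧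
    -- naturality of `m'`
    (∀ {X Y : Kleisli T} (f : X ⟶ Y),
      (Ftau T F').map ((Ftau T F').map f) ≫ FtauMul T F' Y =
        FtauMul T F' X ≫ (Ftau T F').map f) ∧
    -- left unit law: `e'_{F̄_τ X} ≫ m'_X = 𝟙`
    (∀ X : Kleisli T,
      FtauUnit T F' ((Ftau T F').obj X) ≫ FtauMul T F' X = 𝟙 ((Ftau T F').obj X)) ∧
    -- right unit law: `F̄_τ(e'_X) ≫ m'_X = 𝟙`
    (∀ X : Kleisli T,
      (Ftau T F').map (FtauUnit T F' X) ≫ FtauMul T F' X = 𝟙 ((Ftau T F').obj X)) ∧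
    -- associativity: `F̄_τ(m'_X) ≫ m'_X = m'_{F̄_τ X} ≫ m'_X`
    (∀ X : Kleisli T,
      (Ftau T F').map (FtauMul T F' X) ≫ FtauMul T F' X =
        FtauMul T F' ((Ftau T F').obj X) ≫ FtauMul T F' X) := by
  refine ⟨fun f => ?_, fun {X Y} f => ?_, fun X => ?_, fun X => ?_, fun X => ?_⟩ <;>
    simp only [FtauUnit, FtauMul, Ftau_obj, Ftau_map]
  · exact (coprod.inr_map _ _).symm
  · show coprod.map (F'.map (coprod.map (F'.map f) f)) (coprod.map (F'.map f) f) ≫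
        (coprod.map (F'.map (coprod.desc 0 (𝟙 Y))) (𝟙 (F'.obj Y ⨿ Y)) ≫
          coprod.desc coprod.inl (𝟙 (F'.obj Y ⨿ Y))) =
      (coprod.map (F'.map (coprod.desc 0 (𝟙 X))) (𝟙 (F'.obj X ⨿ X)) ≫
          coprod.desc coprod.inl (𝟙 (F'.obj X ⨿ X))) ≫ coprod.map (F'.map f) f
    apply coprod.hom_ext <;> (try apply coprod.hom_ext) <;>
      simp [← F'.map_comp, ← Functor.map_comp_assoc, coprod.desc_comp, coprod.inl_desc,
        coprod.inr_desc, coprod.inl_desc_assoc, coprod.inr_desc_assoc]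
  · show (coprod.inr : F'.obj X ⨿ X ⟶ F'.obj (F'.obj X ⨿ X) ⨿ (F'.obj X ⨿ X)) ≫
        (coprod.map (F'.map (coprod.desc 0 (𝟙 X))) (𝟙 (F'.obj X ⨿ X)) ≫
          coprod.desc coprod.inl (𝟙 (F'.obj X ⨿ X))) = 𝟙 (F'.obj X ⨿ X)
    apply coprod.hom_ext <;> (try apply coprod.hom_ext) <;>
      simp [← F'.map_comp, ← Functor.map_comp_assoc, coprod.desc_comp, coprod.inl_desc,
        coprod.inr_desc, coprod.inl_desc_assoc, coprod.inr_desc_assoc]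
  · show coprod.map (F'.map (coprod.inr : X ⟶ F'.obj X ⨿ X)) (coprod.inr : X ⟶ F'.obj X ⨿ X) ≫
        (coprod.map (F'.map (coprod.desc 0 (𝟙 X))) (𝟙 (F'.obj X ⨿ X)) ≫
          coprod.desc coprod.inl (𝟙 (F'.obj X ⨿ X))) = 𝟙 (F'.obj X ⨿ X)
    apply coprod.hom_ext <;> (try apply coprod.hom_ext) <;>
      simp [← F'.map_comp, ← Functor.map_comp_assoc, coprod.desc_comp, coprod.inl_desc,
        coprod.inr_desc, coprod.inl_desc_assoc, coprod.inr_desc_assoc]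
  · show coprod.map
        (F'.map (coprod.map (F'.map (coprod.desc 0 (𝟙 X))) (𝟙 (F'.obj X ⨿ X)) ≫
          coprod.desc coprod.inl (𝟙 (F'.obj X ⨿ X))))
        (coprod.map (F'.map (coprod.desc 0 (𝟙 X))) (𝟙 (F'.obj X ⨿ X)) ≫
          coprod.desc coprod.inl (𝟙 (F'.obj X ⨿ X))) ≫
        (coprod.map (F'.map (coprod.desc 0 (𝟙 X))) (𝟙 (F'.obj X ⨿ X)) ≫
          coprod.desc coprod.inl (𝟙 (F'.obj X ⨿ X))) =
      (coprod.map (F'.map (coprod.desc 0 (𝟙 (F'.obj X ⨿ X))))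
          (𝟙 (F'.obj (F'.obj X ⨿ X) ⨿ (F'.obj X ⨿ X))) ≫
          coprod.desc coprod.inl (𝟙 (F'.obj (F'.obj X ⨿ X) ⨿ (F'.obj X ⨿ X)))) ≫
        (coprod.map (F'.map (coprod.desc 0 (𝟙 X))) (𝟙 (F'.obj X ⨿ X)) ≫
          coprod.desc coprod.inl (𝟙 (F'.obj X ⨿ X)))
    apply coprod.hom_ext <;> (try apply coprod.hom_ext) <;>
      simp [← F'.map_comp, ← Functor.map_comp_assoc, coprod.desc_comp, coprod.inl_desc,
        coprod.inr_desc, coprod.inl_desc_assoc, coprod.inr_desc_assoc]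
end

section
/- Let T be a monad on C, F : C → C a functor lifting to F̄ on Kl(T), and suppose F admits free algebras i_X in C. Then i_X^♯ = η_{F*X} ∘ i_X : F F*X + X → T F*X is the free F̄-algebra over X in Kl(T). -/
/-!
STATEMENT 8: Let `T` be a monad on `C`, `F : C ⥤ C` a functor lifting to `F̄` on
`Kl(T)`, and suppose `F` admits free algebras `i_X` (initial `F(−)+X`-algebras) in `C`.
Then `i_X^♯ = η_{F*X} ∘ i_X : F F*X + X → T F*X` is the free `F̄`-algebra over `X`
(the initial `F̄(−)+X`-algebra) in `Kl(T)`.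
-/

open CategoryTheory CategoryTheory.Limits

variable {C : Type*} [Category C] [HasBinaryCoproducts C]

/-- The endofunctor `F(−) + X`. -/
@[simps]
noncomputable def plusConst (F : C ⥤ C) (X : C) : C ⥤ C where
  obj Y := F.obj Y ⨿ X
  map f := coprod.map (F.map f) (𝟙 X)

variable (T : Monad C) [HasBinaryCoproducts (Kleisli T)]

/-- An object of `C` viewed as an object of the Kleisli category of `T`. -/
def kObj (X : C) : Kleisli T := Kleisli.mk T X

/-- A morphism `f : X ⟶ TY` of `C` viewed as a Kleisli morphism `X ⊸ Y`. -/
def kHom {X Y : C} (f : X ⟶ T.obj Y) : kObj T X ⟶ kObj T Y := Kleisli.Hom.mk f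

/-- The endofunctor `F̄(−) + X` on `Kl(T)`. -/
@[simps]
noncomputable def plusConstKl (F' : Kleisli T ⥤ Kleisli T) (X : Kleisli T) :
    Kleisli T ⥤ Kleisli T where
  obj Y := F'.obj Y ⨿ X
  map f := coprod.map (F'.map f) (𝟙 X)

/-- The `F̄(−)+X`-algebra `i_X^♯ = η ∘ i_X` on the carrier `F*X` of the initial
`F(−)+X`-algebra `i_X`: its components are `η ∘ (i_X ∘ ι¹)` and `η ∘ (i_X ∘ ι²)`,
cotupled in `Kl(T)` (using `F̄(F*X) = F(F*X)`, which holds since `F̄` lifts `F`). -/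
noncomputable def sharpAlgebra (F : C ⥤ C)
    [∀ X : C, HasInitial (Endofunctor.Algebra (plusConst F X))]
    (F' : Kleisli T ⥤ Kleisli T)
    (hlift : Kleisli.Adjunction.toKleisli T ⋙ F' = F ⋙ Kleisli.Adjunction.toKleisli T)
    (X : C) : Endofunctor.Algebra (plusConstKl T F' (kObj T X)) :=
  { a := kObj T (⊥_ (Endofunctor.Algebra (plusConst F X))).a
    str := coprod.desc
      (eqToHom (Functor.congr_obj hlift (⊥_ (Endofunctor.Algebra (plusConst F X))).a) ≫
        kHom T ((coprod.inl ≫ (⊥_ (Endofunctor.Algebra (plusConst F X))).str) ≫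
          T.η.app _))
      (kHom T ((coprod.inr ≫ (⊥_ (Endofunctor.Algebra (plusConst F X))).str) ≫
          T.η.app _)) }

/-! ### Auxiliary lemmas -/

section Aux

variable {T}

/-- A Kleisli morphism viewed as a `C`-morphism into `T`. -/
def unK {P Q : Kleisli T} (g : P ⟶ Q) : P.of ⟶ T.obj Q.of := g.of

lemma unK_kHom_comp {P Q : C} {R : Kleisli T} (c : P ⟶ Q) (g : kObj T Q ⟶ R) :
    unK (kHom T (c ≫ T.η.app Q) ≫ g) = c ≫ unK g := by
  show (c ≫ T.η.app Q) ≫ T.map (unK g) ≫ T.μ.app R.of = _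
  erw [Category.assoc, ← T.η.naturality_assoc (unK g)]
  simp
  rfl

lemma unK_toKleisli_comp {P Q : C} {R : Kleisli T} (c : P ⟶ Q) (g : kObj T Q ⟶ R) :
    unK ((Kleisli.Adjunction.toKleisli T).map c ≫ g) = c ≫ unK g :=
  unK_kHom_comp c g

lemma unK_eqToHom_comp {P Q R : Kleisli T} (e : P = Q) (g : Q ⟶ R) :
    unK (eqToHom e ≫ g) = eqToHom (show P.of = Q.of from congrArg Kleisli.of e) ≫ unK g := by
  subst e
  simp [unK]

lemma unK_comp {P Q R : Kleisli T} (f : P ⟶ Q) (g : Q ⟶ R) :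
    unK (f ≫ g) = unK f ≫ T.map (unK g) ≫ T.μ.app R.of := rfl


section Free

variable (F : C ⥤ C) [∀ X : C, HasInitial (Endofunctor.Algebra (plusConst F X))]
variable {F' : Kleisli T ⥤ Kleisli T}

lemma eobjC (F : C ⥤ C) {F' : Kleisli T ⥤ Kleisli T}
    (hlift : Kleisli.Adjunction.toKleisli T ⋙ F' = F ⋙ Kleisli.Adjunction.toKleisli T)
    (P : C) : (F'.obj (kObj T P)).of = F.obj P :=
  congrArg Kleisli.of (Functor.congr_obj hlift P)

variable {X : C} (B : Endofunctor.Algebra (plusConstKl T F' (kObj T X)))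

/-- First component of `B.str`, as a `C`-morphism. -/
noncomputable def bOne : (F'.obj B.a).of ⟶ T.obj B.a.of := unK (coprod.inl ≫ B.str)

/-- Second component of `B.str`, as a `C`-morphism. -/
noncomputable def bTwo : X ⟶ T.obj B.a.of := unK (coprod.inr ≫ B.str)

/-- The distributivity morphism `F (T A) ⟶ T (F' A)` obtained from the lifting. -/
noncomputable def lam (F : C ⥤ C)
    (hlift : Kleisli.Adjunction.toKleisli T ⋙ F' = F ⋙ Kleisli.Adjunction.toKleisli T) :
    F.obj (T.obj B.a.of) ⟶ T.obj (F'.obj B.a).of :=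
  eqToHom (eobjC F hlift (T.obj B.a.of)).symm ≫ unK (F'.map (kHom T (𝟙 (T.obj B.a.of))))

/-- The `F(−)+X`-algebra on `T B.a` induced by the `F̄(−)+X`-algebra `B`. -/
noncomputable def tAlg (F : C ⥤ C)
    (hlift : Kleisli.Adjunction.toKleisli T ⋙ F' = F ⋙ Kleisli.Adjunction.toKleisli T) :
    Endofunctor.Algebra (plusConst F X) where
  a := T.obj B.a.of
  str := coprod.desc
    (lam B F hlift ≫ T.map (bOne B) ≫ T.μ.app B.a.of)
    (bTwo B)

lemma factor (F : C ⥤ C) [∀ X : C, HasInitial (Endofunctor.Algebra (plusConst F X))]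
    (hlift : Kleisli.Adjunction.toKleisli T ⋙ F' = F ⋙ Kleisli.Adjunction.toKleisli T)
    (m : kObj T (⊥_ (Endofunctor.Algebra (plusConst F X))).a ⟶ B.a) :
    unK (F'.map m) =
      eqToHom (eobjC F hlift (⊥_ (Endofunctor.Algebra (plusConst F X))).a) ≫
        F.map (unK m) ≫ lam B F hlift := by
  have h1 : m = (Kleisli.Adjunction.toKleisli T).map (unK m) ≫ kHom T (𝟙 (T.obj B.a.of)) := by
    apply Kleisli.hom_ext
    show unK m = (unK m ≫ T.η.app (T.obj B.a.of)) ≫ T.map (𝟙 (T.obj B.a.of)) ≫ T.μ.app B.a.of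
    simp [unK]
  conv_lhs => erw [h1, F'.map_comp]
  have h2 := Functor.congr_hom hlift (unK m)
  simp only [Functor.comp_map] at h2
  erw [h2]
  erw [Category.assoc, Category.assoc, unK_eqToHom_comp, unK_toKleisli_comp, unK_eqToHom_comp]
  simp only [lam, Category.assoc]
  rfl

lemma cond_iff (F : C ⥤ C) [∀ X : C, HasInitial (Endofunctor.Algebra (plusConst F X))]
    (hlift : Kleisli.Adjunction.toKleisli T ⋙ F' = F ⋙ Kleisli.Adjunction.toKleisli T)
    (m : kObj T (⊥_ (Endofunctor.Algebra (plusConst F X))).a ⟶ B.a) :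
    ((plusConstKl T F' (kObj T X)).map m ≫ B.str = (sharpAlgebra T F F' hlift X).str ≫ m)
    ↔ ((plusConst F X).map (unK m) ≫ (tAlg B F hlift).str =
        (⊥_ (Endofunctor.Algebra (plusConst F X))).str ≫ unK m) := by
  have hL1 : unK (coprod.inl ≫ ((plusConstKl T F' (kObj T X)).map m ≫ B.str))
      = eqToHom (eobjC F hlift (⊥_ (Endofunctor.Algebra (plusConst F X))).a) ≫
          F.map (unK m) ≫ lam B F hlift ≫ T.map (bOne B) ≫ T.μ.app B.a.of := by
    have e : coprod.inl ≫ ((plusConstKl T F' (kObj T X)).map m ≫ B.str)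
        = F'.map m ≫ (coprod.inl ≫ B.str) := by simp [plusConstKl]
    rw [e, unK_comp, factor B F hlift m]
    simp [bOne, Category.assoc]
  have hR1 : unK (coprod.inl ≫ ((sharpAlgebra T F F' hlift X).str ≫ m))
      = eqToHom (eobjC F hlift (⊥_ (Endofunctor.Algebra (plusConst F X))).a) ≫
          (coprod.inl ≫ (⊥_ (Endofunctor.Algebra (plusConst F X))).str) ≫ unK m := by
    have e : coprod.inl ≫ ((sharpAlgebra T F F' hlift X).str ≫ m)
        = eqToHom (Functor.congr_obj hlift (⊥_ (Endofunctor.Algebra (plusConst F X))).a) ≫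
          (kHom T ((coprod.inl ≫ (⊥_ (Endofunctor.Algebra (plusConst F X))).str) ≫
            T.η.app _) ≫ m) := by
      exact (coprod.inl_desc_assoc _ _ _).trans (Category.assoc _ _ _)
    erw [e, unK_eqToHom_comp, unK_kHom_comp]
    exact rfl
  have hL2 : unK (coprod.inr ≫ ((plusConstKl T F' (kObj T X)).map m ≫ B.str)) = bTwo B := by
    have e : coprod.inr ≫ ((plusConstKl T F' (kObj T X)).map m ≫ B.str)
        = coprod.inr ≫ B.str := by simp [plusConstKl]
    rw [e]; rfl
  have hR2 : unK (coprod.inr ≫ ((sharpAlgebra T F F' hlift X).str ≫ m))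
      = (coprod.inr ≫ (⊥_ (Endofunctor.Algebra (plusConst F X))).str) ≫ unK m := by
    have e : coprod.inr ≫ ((sharpAlgebra T F F' hlift X).str ≫ m)
        = kHom T ((coprod.inr ≫ (⊥_ (Endofunctor.Algebra (plusConst F X))).str) ≫
            T.η.app _) ≫ m := by
      exact coprod.inr_desc_assoc _ _ _
    rw [e, unK_kHom_comp]
    rfl
  have cL1 : coprod.inl ≫ ((plusConst F X).map (unK m) ≫ (tAlg B F hlift).str)
      = F.map (unK m) ≫ lam B F hlift ≫ T.map (bOne B) ≫ T.μ.app B.a.of := by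
    simp [tAlg, plusConst]
    exact coprod.inl_desc _ _
  have cL2 : coprod.inr ≫ ((plusConst F X).map (unK m) ≫ (tAlg B F hlift).str) = bTwo B := by
    simp [tAlg, plusConst]
    exact coprod.inr_desc _ _
  constructor
  · intro hc
    apply coprod.hom_ext
    · have key : unK (coprod.inl ≫ ((plusConstKl T F' (kObj T X)).map m ≫ B.str))
          = unK (coprod.inl ≫ ((sharpAlgebra T F F' hlift X).str ≫ m)) := by
        erw [hc]
        exact rfl
      rw [hL1, hR1] at key
      have key2 := (cancel_epi (eqToHom (eobjC F hlift
        (⊥_ (Endofunctor.Algebra (plusConst F X))).a))).mp key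
      erw [cL1, key2]
      erw [Category.assoc]
      exact rfl
    · have key : unK (coprod.inr ≫ ((plusConstKl T F' (kObj T X)).map m ≫ B.str))
          = unK (coprod.inr ≫ ((sharpAlgebra T F F' hlift X).str ≫ m)) := by
        erw [hc]
        exact rfl
      rw [hL2, hR2] at key
      erw [cL2, key]
      erw [Category.assoc]
      exact rfl
  · intro hc
    apply coprod.hom_ext
    · have d1 : F.map (unK m) ≫ lam B F hlift ≫ T.map (bOne B) ≫ T.μ.app B.a.of
          = (coprod.inl ≫ (⊥_ (Endofunctor.Algebra (plusConst F X))).str) ≫ unK m := by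
        erw [← cL1, hc]
        erw [Category.assoc]
        exact rfl
      have key : unK (coprod.inl ≫ ((plusConstKl T F' (kObj T X)).map m ≫ B.str))
          = unK (coprod.inl ≫ ((sharpAlgebra T F F' hlift X).str ≫ m)) := by
        erw [hL1, hR1, d1]
      exact Kleisli.hom_ext key
    · have d2 : bTwo B = (coprod.inr ≫ (⊥_ (Endofunctor.Algebra (plusConst F X))).str)
          ≫ unK m := by
        erw [← cL2, hc]
        erw [Category.assoc]
        exact rfl
      have key : unK (coprod.inr ≫ ((plusConstKl T F' (kObj T X)).map m ≫ B.str))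
          = unK (coprod.inr ≫ ((sharpAlgebra T F F' hlift X).str ≫ m)) := by
        erw [hL2, hR2, d2]
      exact Kleisli.hom_ext key

end Free

end Aux

set_option maxHeartbeats 1000000 in
theorem sharp_of_initial_algebra_is_free_algebra_in_kleisli (F : C ⥤ C)
    [∀ X : C, HasInitial (Endofunctor.Algebra (plusConst F X))]
    (F' : Kleisli T ⥤ Kleisli T)
    (hlift : Kleisli.Adjunction.toKleisli T ⋙ F' = F ⋙ Kleisli.Adjunction.toKleisli T)
    (X : C) :
    Nonempty (IsInitial (sharpAlgebra T F F' hlift X)) := by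
  constructor
  apply IsInitial.ofUniqueHom
    (fun B => Endofunctor.Algebra.Hom.mk (kHom T (initial.to (tAlg B F hlift)).f)
      ((cond_iff B F hlift (kHom T (initial.to (tAlg B F hlift)).f)).mpr
        (initial.to (tAlg B F hlift)).h))
  intro B mAlg
  refine Endofunctor.Algebra.ext ?_
  let mC : (⊥_ (Endofunctor.Algebra (plusConst F X))) ⟶ tAlg B F hlift :=
    Endofunctor.Algebra.Hom.mk (unK mAlg.f) ((cond_iff B F hlift mAlg.f).mp mAlg.h)
  have hmc : mC = initial.to (tAlg B F hlift) := initial.hom_ext _ _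
  have h2 := congrArg Endofunctor.Algebra.Hom.f hmc
  exact Kleisli.hom_ext h2
end

section
/- Let T be an order saturation monad with saturator (−)*, and let (S̄, m, e) be a locally monotonic monad on Kl(T) which is a lifting of S : C → C satisfying m_X · S̄[(m_X · S̄α)* · e_X] = (m_X · S̄α)* for all α : X ⊸ S̄X. Then TS is an order saturation monad with saturator α^★ = (m_X · S̄α)* · e_X. -/
/-!
STATEMENT 12: Let `T` be an order saturation monad with saturator `(−)*`, and let
`(S̄, m, e)` be a locally monotonic monad on `Kl(T)` which is a lifting of `S : C ⥤ C`
satisfying `m_X · S̄[(m_X · S̄α)* · e_X] = (m_X · S̄α)*` for all `α : X ⊸ S̄X`.  Then `TS`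
is an order saturation monad with saturator `α^★ = (m_X · S̄α)* · e_X`.

Kleisli morphisms `X ⊸ Y` of `TS` are morphisms `X ⟶ S̄Y` of `Kl(T)`; the Kleisli
composition of `TS` is `g·f = f ≫ S̄.map g ≫ S̄.μ`, its unit is `S̄.η`, its order is the
one inherited from `Kl(T)`, and its `♯`-functor sends `f : X ⟶ Y` in `C` to
`f♯ ≫ S̄.η.app Y`.
-/

open CategoryTheory

variable {C : Type*} [Category C] (T : Monad C)
  [∀ X Y : Kleisli T, PartialOrder (X ⟶ Y)]

/-- Kleisli composition `g · f` for a monad `S̄` on `Kl(T)`. -/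
def sComp (S' : Monad (Kleisli T)) {X Y Z : Kleisli T}
    (g : Y ⟶ S'.obj Z) (f : X ⟶ S'.obj Y) : X ⟶ S'.obj Z :=
  f ≫ S'.map g ≫ S'.μ.app Z

/-- The `♯`-image in `Kl(TS)` of a morphism `f : X ⟶ Y` of `C`. -/
def sSharp (S' : Monad (Kleisli T)) {X Y : C} (f : X ⟶ Y) :
    ((Kleisli.Adjunction.toKleisli T).obj X) ⟶ S'.obj ((Kleisli.Adjunction.toKleisli T).obj Y) :=
  (Kleisli.Adjunction.toKleisli T).map f ≫ S'.η.app _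

theorem TS_is_order_saturation_monad
    -- `Kl(T)` is order enriched: composition is monotone on both sides
    (hpost : ∀ {X Y Z : Kleisli T} (f : X ⟶ Y), Monotone (fun g : Y ⟶ Z => f ≫ g))
    (hpre : ∀ {X Y Z : Kleisli T} (g : Y ⟶ Z), Monotone (fun f : X ⟶ Y => f ≫ g))
    -- the saturator of `T`
    (star : ∀ {X : Kleisli T}, (X ⟶ X) → (X ⟶ X))
    (ha : ∀ {X : Kleisli T} (α : X ⟶ X), 𝟙 X ≤ star α)
    (hb : ∀ {X : Kleisli T} (α : X ⟶ X), α ≤ star α)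
    (hc : ∀ {X : Kleisli T} (α : X ⟶ X), star α ≫ star α ≤ star α)
    (hd : ∀ {X : Kleisli T} (α β : X ⟶ X),
      𝟙 X ≤ β → α ≤ β → β ≫ β ≤ β → star α ≤ β)
    (he : ∀ {X Y : C} (f : X ⟶ Y)
      (α : ((Kleisli.Adjunction.toKleisli T).obj X) ⟶ (Kleisli.Adjunction.toKleisli T).obj X)
      (β : ((Kleisli.Adjunction.toKleisli T).obj Y) ⟶ (Kleisli.Adjunction.toKleisli T).obj Y),
      (α ≫ (Kleisli.Adjunction.toKleisli T).map f ≤ (Kleisli.Adjunction.toKleisli T).map f ≫ β →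
        star α ≫ (Kleisli.Adjunction.toKleisli T).map f ≤
          (Kleisli.Adjunction.toKleisli T).map f ≫ star β) ∧
      ((Kleisli.Adjunction.toKleisli T).map f ≫ β ≤ α ≫ (Kleisli.Adjunction.toKleisli T).map f →
        (Kleisli.Adjunction.toKleisli T).map f ≫ star β ≤
          star α ≫ (Kleisli.Adjunction.toKleisli T).map f))
    -- a monad `S̄` on `Kl(T)` lifting `S : C ⥤ C`
    (S' : Monad (Kleisli T)) (S : C ⥤ C)
    (hlift : Kleisli.Adjunction.toKleisli T ⋙ S'.toFunctor =
      S ⋙ Kleisli.Adjunction.toKleisli T)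
    -- `S̄` is locally monotonic
    (hmono : ∀ {X Y : Kleisli T}, Monotone (fun f : X ⟶ Y => S'.map f))
    -- the compatibility equation `m_X · S̄[(m_X · S̄α)* · e_X] = (m_X · S̄α)*`
    (hstar : ∀ {X : Kleisli T} (α : X ⟶ S'.obj X),
      S'.map (S'.η.app X ≫ star (S'.map α ≫ S'.μ.app X)) ≫ S'.μ.app X =
        star (S'.map α ≫ S'.μ.app X)) :
    -- then `α^★ := (m_X · S̄α)* · e_X = e_X ≫ (S̄α ≫ m_X)*` is a saturator for `TS`:
    -- (a) `1 ≤ α^★`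
    (∀ {X : Kleisli T} (α : X ⟶ S'.obj X),
      S'.η.app X ≤ S'.η.app X ≫ star (S'.map α ≫ S'.μ.app X)) ∧
    -- (b) `α ≤ α^★`
    (∀ {X : Kleisli T} (α : X ⟶ S'.obj X),
      α ≤ S'.η.app X ≫ star (S'.map α ≫ S'.μ.app X)) ∧
    -- (c) `α^★ · α^★ ≤ α^★`
    (∀ {X : Kleisli T} (α : X ⟶ S'.obj X),
      sComp T S' (S'.η.app X ≫ star (S'.map α ≫ S'.μ.app X))
          (S'.η.app X ≫ star (S'.map α ≫ S'.μ.app X)) ≤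
        S'.η.app X ≫ star (S'.map α ≫ S'.μ.app X)) ∧
    -- (d) `α^★` is the least reflexive, transitive element above `α`
    (∀ {X : Kleisli T} (α β : X ⟶ S'.obj X),
      S'.η.app X ≤ β → α ≤ β → sComp T S' β β ≤ β →
        S'.η.app X ≫ star (S'.map α ≫ S'.μ.app X) ≤ β) ∧
    -- (e) compatibility with `♯`-morphisms, for `≤` and `≥`
    (∀ {X Y : C} (f : X ⟶ Y)
      (α : ((Kleisli.Adjunction.toKleisli T).obj X) ⟶
        S'.obj ((Kleisli.Adjunction.toKleisli T).obj X))
      (β : ((Kleisli.Adjunction.toKleisli T).obj Y) ⟶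
        S'.obj ((Kleisli.Adjunction.toKleisli T).obj Y)),
      (sComp T S' (sSharp T S' f) α ≤ sComp T S' β (sSharp T S' f) →
        sComp T S' (sSharp T S' f) (S'.η.app _ ≫ star (S'.map α ≫ S'.μ.app _)) ≤
          sComp T S' (S'.η.app _ ≫ star (S'.map β ≫ S'.μ.app _)) (sSharp T S' f)) ∧
      (sComp T S' β (sSharp T S' f) ≤ sComp T S' (sSharp T S' f) α →
        sComp T S' (S'.η.app _ ≫ star (S'.map β ≫ S'.μ.app _)) (sSharp T S' f) ≤
          sComp T S' (sSharp T S' f) (S'.η.app _ ≫ star (S'.map α ≫ S'.μ.app _)))) := by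
  have hnat : ∀ {X Y : Kleisli T} (g : X ⟶ S'.obj Y),
      S'.η.app X ≫ S'.map g ≫ S'.μ.app Y = g := by
    intro X Y g
    have h1 : S'.η.app X ≫ S'.map g = g ≫ S'.η.app (S'.obj Y) := by
      simpa using (S'.η.naturality g).symm
    rw [← Category.assoc, h1, Category.assoc, S'.left_unit]
    simp
  -- generic computation lemmas
  have G1 : ∀ {R P Q : Kleisli T} (γ : R ⟶ S'.obj P) (u : P ⟶ Q),
      γ ≫ S'.map (u ≫ S'.η.app Q) ≫ S'.μ.app Q = γ ≫ S'.map u := by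
    intro R P Q γ u
    rw [Functor.map_comp, Category.assoc, S'.right_unit]
    simp
  have G2 : ∀ {R P Q : Kleisli T} (u : R ⟶ P) (δ : P ⟶ S'.obj Q),
      (u ≫ S'.η.app P) ≫ S'.map δ ≫ S'.μ.app Q = u ≫ δ := by
    intro R P Q u δ
    rw [Category.assoc, hnat]
  have G3 : ∀ {P Q : Kleisli T} (α : P ⟶ S'.obj P) (u : P ⟶ Q),
      (S'.map α ≫ S'.μ.app P) ≫ S'.map u = S'.map (α ≫ S'.map u) ≫ S'.μ.app Q := by
    intro P Q α u
    rw [Functor.map_comp, Category.assoc, Category.assoc, ← S'.μ.naturality u]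
    rfl
  refine ⟨?_, ?_, ?_, ?_, ?_⟩
  · -- (a)
    intro X α
    simpa using hpost (S'.η.app X) (ha (S'.map α ≫ S'.μ.app X))
  · -- (b)
    intro X α
    calc α = S'.η.app X ≫ S'.map α ≫ S'.μ.app X := (hnat α).symm
      _ ≤ S'.η.app X ≫ star (S'.map α ≫ S'.μ.app X) :=
        hpost (S'.η.app X) (hb (S'.map α ≫ S'.μ.app X))
  · -- (c)
    intro X α
    have : sComp T S' (S'.η.app X ≫ star (S'.map α ≫ S'.μ.app X))
        (S'.η.app X ≫ star (S'.map α ≫ S'.μ.app X)) =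
        S'.η.app X ≫ star (S'.map α ≫ S'.μ.app X) ≫ star (S'.map α ≫ S'.μ.app X) := by
      unfold sComp
      rw [hstar α, Category.assoc]
    rw [this]
    exact hpost (S'.η.app X) (hc (S'.map α ≫ S'.μ.app X))
  · -- (d)
    intro X α β h1 h2 h3
    have hB1 : 𝟙 (S'.obj X) ≤ S'.map β ≫ S'.μ.app X := by
      calc 𝟙 (S'.obj X) = S'.map (S'.η.app X) ≫ S'.μ.app X := (S'.right_unit X).symm
        _ ≤ S'.map β ≫ S'.μ.app X := hpre (S'.μ.app X) (hmono h1)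
    have hB2 : S'.map α ≫ S'.μ.app X ≤ S'.map β ≫ S'.μ.app X :=
      hpre (S'.μ.app X) (hmono h2)
    have hB3 : (S'.map β ≫ S'.μ.app X) ≫ S'.map β ≫ S'.μ.app X ≤ S'.map β ≫ S'.μ.app X := by
      have key : (S'.map β ≫ S'.μ.app X) ≫ S'.map β ≫ S'.μ.app X =
          S'.map (sComp T S' β β) ≫ S'.μ.app X := by
        show _ = S'.map (β ≫ S'.map β ≫ S'.μ.app X) ≫ S'.μ.app X
        simp only [Functor.map_comp, Category.assoc, Monad.assoc]
        rw [← S'.μ.naturality_assoc β]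
        rfl
      rw [key]
      exact hpre (S'.μ.app X) (hmono h3)
    have hle : star (S'.map α ≫ S'.μ.app X) ≤ S'.map β ≫ S'.μ.app X :=
      hd _ _ hB1 hB2 hB3
    calc S'.η.app X ≫ star (S'.map α ≫ S'.μ.app X)
        ≤ S'.η.app X ≫ S'.map β ≫ S'.μ.app X := hpost (S'.η.app X) hle
      _ = β := hnat β
  · -- (e)
    intro X Y f α β
    have l1 : ∀ (γ : (Kleisli.Adjunction.toKleisli T).obj X ⟶
          S'.obj ((Kleisli.Adjunction.toKleisli T).obj X)),
        sComp T S' (sSharp T S' f) γ =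
          γ ≫ S'.map ((Kleisli.Adjunction.toKleisli T).map f) :=
      fun γ => G1 γ ((Kleisli.Adjunction.toKleisli T).map f)
    have l2 : ∀ (δ : (Kleisli.Adjunction.toKleisli T).obj Y ⟶
          S'.obj ((Kleisli.Adjunction.toKleisli T).obj Y)),
        sComp T S' δ (sSharp T S' f) = (Kleisli.Adjunction.toKleisli T).map f ≫ δ :=
      fun δ => G2 ((Kleisli.Adjunction.toKleisli T).map f) δ
    have hoX : S'.obj ((Kleisli.Adjunction.toKleisli T).obj X) =
        (Kleisli.Adjunction.toKleisli T).obj (S.obj X) := Functor.congr_obj hlift X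
    have hoY : S'.obj ((Kleisli.Adjunction.toKleisli T).obj Y) =
        (Kleisli.Adjunction.toKleisli T).obj (S.obj Y) := Functor.congr_obj hlift Y
    have hm' : (Kleisli.Adjunction.toKleisli T).map (S.map f) =
        eqToHom hoX.symm ≫ S'.map ((Kleisli.Adjunction.toKleisli T).map f) ≫ eqToHom hoY := by
      have h := Functor.congr_hom hlift.symm f
      simpa [Functor.comp_map] using h
    have hstarconj : ∀ {P Q : Kleisli T} (h : P = Q) (γ : P ⟶ P),
        star (eqToHom h.symm ≫ γ ≫ eqToHom h) = eqToHom h.symm ≫ star γ ≫ eqToHom h := by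
      intro P Q h γ; subst h; simp
    have hcancel : ∀ {P Q P' Q' : Kleisli T} (h1 : P = P') (h2 : Q = Q') (u v : P ⟶ Q),
        eqToHom h1.symm ≫ u ≫ eqToHom h2 ≤ eqToHom h1.symm ≫ v ≫ eqToHom h2 → u ≤ v := by
      intro P Q P' Q' h1 h2 u v h
      subst h1; subst h2; simpa using h
    have hkey : ∀ (h0 : α ≫ S'.map ((Kleisli.Adjunction.toKleisli T).map f) ≤
          (Kleisli.Adjunction.toKleisli T).map f ≫ β),
        (S'.map α ≫ S'.μ.app _) ≫ S'.map ((Kleisli.Adjunction.toKleisli T).map f) ≤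
          S'.map ((Kleisli.Adjunction.toKleisli T).map f) ≫ S'.map β ≫ S'.μ.app _ := by
      intro h0
      rw [G3 α ((Kleisli.Adjunction.toKleisli T).map f),
        show S'.map ((Kleisli.Adjunction.toKleisli T).map f) ≫ S'.map β ≫ S'.μ.app _ =
          S'.map ((Kleisli.Adjunction.toKleisli T).map f ≫ β) ≫ S'.μ.app _ by
            rw [Functor.map_comp, Category.assoc]]
      exact hpre (S'.μ.app _) (hmono h0)
    have hkey' : ∀ (h0 : (Kleisli.Adjunction.toKleisli T).map f ≫ β ≤
          α ≫ S'.map ((Kleisli.Adjunction.toKleisli T).map f)),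
        S'.map ((Kleisli.Adjunction.toKleisli T).map f) ≫ S'.map β ≫ S'.μ.app _ ≤
          (S'.map α ≫ S'.μ.app _) ≫ S'.map ((Kleisli.Adjunction.toKleisli T).map f) := by
      intro h0
      rw [G3 α ((Kleisli.Adjunction.toKleisli T).map f),
        show S'.map ((Kleisli.Adjunction.toKleisli T).map f) ≫ S'.map β ≫ S'.μ.app _ =
          S'.map ((Kleisli.Adjunction.toKleisli T).map f ≫ β) ≫ S'.μ.app _ by
            rw [Functor.map_comp, Category.assoc]]
      exact hpre (S'.μ.app _) (hmono h0)
    have main : ∀ (hAB : (S'.map α ≫ S'.μ.app _) ≫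
            S'.map ((Kleisli.Adjunction.toKleisli T).map f) ≤
          S'.map ((Kleisli.Adjunction.toKleisli T).map f) ≫ S'.map β ≫ S'.μ.app _),
        star (S'.map α ≫ S'.μ.app _) ≫ S'.map ((Kleisli.Adjunction.toKleisli T).map f) ≤
          S'.map ((Kleisli.Adjunction.toKleisli T).map f) ≫
            star (S'.map β ≫ S'.μ.app _) := by
      intro hAB
      have prem : (eqToHom hoX.symm ≫ (S'.map α ≫ S'.μ.app _) ≫ eqToHom hoX) ≫
            (Kleisli.Adjunction.toKleisli T).map (S.map f) ≤
          (Kleisli.Adjunction.toKleisli T).map (S.map f) ≫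
            (eqToHom hoY.symm ≫ (S'.map β ≫ S'.μ.app _) ≫ eqToHom hoY) := by
        rw [hm']
        simp only [Category.assoc, eqToHom_trans, eqToHom_refl, Category.id_comp,
          eqToHom_trans_assoc]
        exact hpost _ (by simpa [Category.assoc] using hpre (eqToHom hoY) hAB)
      have conc := (he (S.map f) (eqToHom hoX.symm ≫ (S'.map α ≫ S'.μ.app _) ≫ eqToHom hoX)
        (eqToHom hoY.symm ≫ (S'.map β ≫ S'.μ.app _) ≫ eqToHom hoY)).1 prem
      rw [hstarconj hoX _, hstarconj hoY _, hm'] at conc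
      simp only [Category.assoc, eqToHom_trans, eqToHom_refl, Category.id_comp,
        eqToHom_trans_assoc] at conc
      refine hcancel hoX hoY _ _ ?_
      simpa [Category.assoc] using conc
    have main' : ∀ (hAB : S'.map ((Kleisli.Adjunction.toKleisli T).map f) ≫
            S'.map β ≫ S'.μ.app _ ≤
          (S'.map α ≫ S'.μ.app _) ≫ S'.map ((Kleisli.Adjunction.toKleisli T).map f)),
        S'.map ((Kleisli.Adjunction.toKleisli T).map f) ≫ star (S'.map β ≫ S'.μ.app _) ≤
          star (S'.map α ≫ S'.μ.app _) ≫
            S'.map ((Kleisli.Adjunction.toKleisli T).map f) := by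
      intro hAB
      have prem : (Kleisli.Adjunction.toKleisli T).map (S.map f) ≫
            (eqToHom hoY.symm ≫ (S'.map β ≫ S'.μ.app _) ≫ eqToHom hoY) ≤
          (eqToHom hoX.symm ≫ (S'.map α ≫ S'.μ.app _) ≫ eqToHom hoX) ≫
            (Kleisli.Adjunction.toKleisli T).map (S.map f) := by
        rw [hm']
        simp only [Category.assoc, eqToHom_trans, eqToHom_refl, Category.id_comp,
          eqToHom_trans_assoc]
        exact hpost _ (by simpa [Category.assoc] using hpre (eqToHom hoY) hAB)
      have conc := (he (S.map f) (eqToHom hoX.symm ≫ (S'.map α ≫ S'.μ.app _) ≫ eqToHom hoX)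
        (eqToHom hoY.symm ≫ (S'.map β ≫ S'.μ.app _) ≫ eqToHom hoY)).2 prem
      rw [hstarconj hoX _, hstarconj hoY _, hm'] at conc
      simp only [Category.assoc, eqToHom_trans, eqToHom_refl, Category.id_comp,
        eqToHom_trans_assoc] at conc
      refine hcancel hoX hoY _ _ ?_
      simpa [Category.assoc] using conc
    have hetanat : S'.η.app ((Kleisli.Adjunction.toKleisli T).obj X) ≫
          S'.map ((Kleisli.Adjunction.toKleisli T).map f) =
        (Kleisli.Adjunction.toKleisli T).map f ≫
          S'.η.app ((Kleisli.Adjunction.toKleisli T).obj Y) := by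
      simpa using (S'.η.naturality ((Kleisli.Adjunction.toKleisli T).map f)).symm
    constructor
    · intro h0
      rw [l1, l2] at h0 ⊢
      have hmid := main (hkey h0)
      calc (S'.η.app ((Kleisli.Adjunction.toKleisli T).obj X) ≫ star (S'.map α ≫ S'.μ.app _)) ≫
            S'.map ((Kleisli.Adjunction.toKleisli T).map f)
          = S'.η.app ((Kleisli.Adjunction.toKleisli T).obj X) ≫ star (S'.map α ≫ S'.μ.app _) ≫
              S'.map ((Kleisli.Adjunction.toKleisli T).map f) := Category.assoc _ _ _
        _ ≤ S'.η.app ((Kleisli.Adjunction.toKleisli T).obj X) ≫ S'.map ((Kleisli.Adjunction.toKleisli T).map f) ≫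
              star (S'.map β ≫ S'.μ.app _) := hpost _ hmid
        _ = (S'.η.app ((Kleisli.Adjunction.toKleisli T).obj X) ≫ S'.map ((Kleisli.Adjunction.toKleisli T).map f)) ≫
              star (S'.map β ≫ S'.μ.app _) := (Category.assoc _ _ _).symm
        _ = ((Kleisli.Adjunction.toKleisli T).map f ≫ S'.η.app ((Kleisli.Adjunction.toKleisli T).obj Y)) ≫
              star (S'.map β ≫ S'.μ.app _) := by rw [hetanat]
        _ = (Kleisli.Adjunction.toKleisli T).map f ≫ S'.η.app ((Kleisli.Adjunction.toKleisli T).obj Y) ≫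
              star (S'.map β ≫ S'.μ.app _) := Category.assoc _ _ _
    · intro h0
      rw [l1, l2] at h0 ⊢
      have hmid := main' (hkey' h0)
      calc (Kleisli.Adjunction.toKleisli T).map f ≫ S'.η.app ((Kleisli.Adjunction.toKleisli T).obj Y) ≫
            star (S'.map β ≫ S'.μ.app _)
          = ((Kleisli.Adjunction.toKleisli T).map f ≫ S'.η.app ((Kleisli.Adjunction.toKleisli T).obj Y)) ≫
              star (S'.map β ≫ S'.μ.app _) := (Category.assoc _ _ _).symm
        _ = (S'.η.app ((Kleisli.Adjunction.toKleisli T).obj X) ≫ S'.map ((Kleisli.Adjunction.toKleisli T).map f)) ≫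
              star (S'.map β ≫ S'.μ.app _) := by rw [hetanat]
        _ = S'.η.app ((Kleisli.Adjunction.toKleisli T).obj X) ≫ S'.map ((Kleisli.Adjunction.toKleisli T).map f) ≫
              star (S'.map β ≫ S'.μ.app _) := Category.assoc _ _ _
        _ ≤ S'.η.app ((Kleisli.Adjunction.toKleisli T).obj X) ≫ star (S'.map α ≫ S'.μ.app _) ≫
              S'.map ((Kleisli.Adjunction.toKleisli T).map f) := hpost _ hmid
        _ = (S'.η.app ((Kleisli.Adjunction.toKleisli T).obj X) ≫ star (S'.map α ≫ S'.μ.app _)) ≫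
              S'.map ((Kleisli.Adjunction.toKleisli T).map f) := (Category.assoc _ _ _).symm
end

section
/- Let h : (F̄*, m, e) → (F̄_τ, m', e') be the unique monad morphism in Kl(T) with h ∘ ν = ι¹, and for α : X ⊸ F̄_τ X let α̲ = [ν_X, e_X] · α. Then h_X · α̲ = α. Moreover, if for all φ : F̄*X ⊸ F̄*X and ψ : F̄_τX ⊸ F̄_τX, ψ · h_X = h_X · φ implies ψ* · h_X = h_X · φ*, then h_X · α̲^⊛ = α^★, where α^★ = (m'_X · F̄_τ α)* · e'_X and α̲^⊛ = (m_X · F̄* α̲)* · e_X. -/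
open CategoryTheory CategoryTheory.Limits

variable {C : Type*} [Category C] (T : Monad C)
  [∀ X Y : Kleisli T, PartialOrder (X ⟶ Y)]
  [HasBinaryCoproducts (Kleisli T)] [HasZeroMorphisms (Kleisli T)]

variable (M : Monad (Kleisli T)) (F' : Kleisli T ⥤ Kleisli T)

/-- The natural transformation `[ν, e] : F̄_τ ⟹ F̄*` (componentwise cotupling of the
universal map `ν : F̄ ⟹ F̄*` and the unit `e` of the free monad `M = F̄*`). -/
noncomputable def nuE (nu : F' ⟶ M.toFunctor) (X : Kleisli T) :
    (Ftau T F').obj X ⟶ M.obj X :=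
  coprod.desc (nu.app X) (M.η.app X)

/-- The translation `α̲ = [ν,e] · α` of an `F̄_τ`-coalgebra into an `F̄*`-coalgebra. -/
noncomputable def underline (nu : F' ⟶ M.toFunctor) {X : Kleisli T}
    (α : X ⟶ (Ftau T F').obj X) : X ⟶ M.obj X :=
  α ≫ nuE T M F' nu X

/-- The saturation `α^★ = (m'_X · F̄_τ α)* · e'_X` of an `F̄_τ`-coalgebra. -/
noncomputable def bigstarTau (star : ∀ {Y : Kleisli T}, (Y ⟶ Y) → (Y ⟶ Y))
    {X : Kleisli T} (α : X ⟶ (Ftau T F').obj X) : X ⟶ (Ftau T F').obj X :=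
  FtauUnit T F' X ≫ star ((Ftau T F').map α ≫ FtauMul T F' X)

/-- The saturation `β^⊛ = (m_X · F̄* β)* · e_X` of an `F̄*`-coalgebra. -/
noncomputable def bigstarM (star : ∀ {Y : Kleisli T}, (Y ⟶ Y) → (Y ⟶ Y))
    {X : Kleisli T} (β : X ⟶ M.obj X) : X ⟶ M.obj X :=
  M.η.app X ≫ star (M.map β ≫ M.μ.app X)

/-!
STATEMENT 13: Let `h : (F̄*, m, e) → (F̄_τ, m', e')` be the unique monad morphism in
`Kl(T)` with `h ∘ ν = ι¹`, and for `α : X ⊸ F̄_τ X` let `α̲ = [ν, e] · α`.  Then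
`h_X · α̲ = α`.  Moreover, if for all `φ : F̄*X ⊸ F̄*X` and `ψ : F̄_τX ⊸ F̄_τX`,
`ψ · h_X = h_X · φ` implies `ψ* · h_X = h_X · φ*`, then `h_X · α̲^⊛ = α^★`, where
`α^★ = (m'_X · F̄_τ α)* · e'_X` and `α̲^⊛ = (m_X · F̄* α̲)* · e_X`.
Here `T` is an order saturation monad whose Kleisli category has zero morphisms, `F̄` is
a lifting of `F`, `M = F̄*` is the free monad over `F̄` with universal map `ν`, and both
`F̄_τ` and `F̄*` satisfy the hypotheses making `TF_τ` and `TF*` order saturation monads.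
-/

theorem monad_morphism_intertwines_saturators
    -- `Kl(T)` is order enriched
    (hpost : ∀ {X Y Z : Kleisli T} (f : X ⟶ Y), Monotone (fun g : Y ⟶ Z => f ≫ g))
    (hpre : ∀ {X Y Z : Kleisli T} (g : Y ⟶ Z), Monotone (fun f : X ⟶ Y => f ≫ g))
    -- `T` is an order saturation monad with saturator `star`
    (star : ∀ {X : Kleisli T}, (X ⟶ X) → (X ⟶ X))
    (ha : ∀ {X : Kleisli T} (α : X ⟶ X), 𝟙 X ≤ star α)
    (hb : ∀ {X : Kleisli T} (α : X ⟶ X), α ≤ star α)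
    (hc : ∀ {X : Kleisli T} (α : X ⟶ X), star α ≫ star α ≤ star α)
    (hd : ∀ {X : Kleisli T} (α β : X ⟶ X), 𝟙 X ≤ β → α ≤ β → β ≫ β ≤ β → star α ≤ β)
    (he : ∀ {X Y : C} (f : X ⟶ Y)
      (α : ((Kleisli.Adjunction.toKleisli T).obj X) ⟶ (Kleisli.Adjunction.toKleisli T).obj X)
      (β : ((Kleisli.Adjunction.toKleisli T).obj Y) ⟶ (Kleisli.Adjunction.toKleisli T).obj Y),
      (α ≫ (Kleisli.Adjunction.toKleisli T).map f ≤ (Kleisli.Adjunction.toKleisli T).map f ≫ β →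
        star α ≫ (Kleisli.Adjunction.toKleisli T).map f ≤
          (Kleisli.Adjunction.toKleisli T).map f ≫ star β) ∧
      ((Kleisli.Adjunction.toKleisli T).map f ≫ β ≤ α ≫ (Kleisli.Adjunction.toKleisli T).map f →
        (Kleisli.Adjunction.toKleisli T).map f ≫ star β ≤
          star α ≫ (Kleisli.Adjunction.toKleisli T).map f))
    -- `F̄` is a lifting of `F`
    (F : C ⥤ C)
    (hlift : Kleisli.Adjunction.toKleisli T ⋙ F' = F ⋙ Kleisli.Adjunction.toKleisli T)
    -- `F̄_τ` and `M = F̄*` are locally monotonic and satisfy the saturator equations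
    (hmonoTau : ∀ {X Y : Kleisli T}, Monotone (fun f : X ⟶ Y => (Ftau T F').map f))
    (hmonoM : ∀ {X Y : Kleisli T}, Monotone (fun f : X ⟶ Y => M.map f))
    (hstarTau : ∀ {X : Kleisli T} (α : X ⟶ (Ftau T F').obj X),
      (Ftau T F').map (bigstarTau T F' @star α) ≫ FtauMul T F' X =
        star ((Ftau T F').map α ≫ FtauMul T F' X))
    (hstarM : ∀ {X : Kleisli T} (β : X ⟶ M.obj X),
      M.map (bigstarM T M @star β) ≫ M.μ.app X = star (M.map β ≫ M.μ.app X))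
    -- the universal map `ν` and the unique monad morphism `h` with `h ∘ ν = ι¹`
    (nu : F' ⟶ M.toFunctor)
    (h : M.toFunctor ⟶ Ftau T F')
    (hν : ∀ X : Kleisli T, nu.app X ≫ h.app X = (coprod.inl : F'.obj X ⟶ (Ftau T F').obj X))
    (hη : ∀ X : Kleisli T, M.η.app X ≫ h.app X = FtauUnit T F' X)
    (hμ : ∀ X : Kleisli T, M.μ.app X ≫ h.app X =
      (h.app (M.obj X) ≫ (Ftau T F').map (h.app X)) ≫ FtauMul T F' X) :
    -- then `h_X · α̲ = α` …
    (∀ {X : Kleisli T} (α : X ⟶ (Ftau T F').obj X),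
      underline T M F' nu α ≫ h.app X = α) ∧
    -- … and under the star-transfer assumption, `h_X · α̲^⊛ = α^★`
    ((∀ {X : Kleisli T} (φ : M.obj X ⟶ M.obj X)
        (ψ : (Ftau T F').obj X ⟶ (Ftau T F').obj X),
        h.app X ≫ ψ = φ ≫ h.app X → h.app X ≫ star ψ = star φ ≫ h.app X) →
      ∀ {X : Kleisli T} (α : X ⟶ (Ftau T F').obj X),
        bigstarM T M @star (underline T M F' nu α) ≫ h.app X =
          bigstarTau T F' @star α) := by
  have part1 : ∀ {X : Kleisli T} (α : X ⟶ (Ftau T F').obj X),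
      underline T M F' nu α ≫ h.app X = α := by
    intro X α
    rw [underline, Category.assoc, nuE]
    erw [coprod.desc_comp]
    rw [hν, hη, FtauUnit]
    erw [coprod.desc_inl_inr]
    exact Category.comp_id α
  refine ⟨part1, ?_⟩
  intro htrans X α
  set β := underline T M F' nu α with hβ
  have key : h.app X ≫ ((Ftau T F').map α ≫ FtauMul T F' X) =
      (M.map β ≫ M.μ.app X) ≫ h.app X := by
    have hn : M.map β ≫ h.app (M.obj X) = h.app X ≫ (Ftau T F').map β :=
      h.naturality β
    rw [Category.assoc, hμ, ← Category.assoc (M.map β), ← Category.assoc (M.map β), hn]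
    simp only [Category.assoc, ← Functor.map_comp_assoc]
    rw [part1 α]
  have hstar := htrans (M.map β ≫ M.μ.app X) ((Ftau T F').map α ≫ FtauMul T F' X) key
  rw [bigstarM, bigstarTau, Category.assoc, ← hstar, ← Category.assoc, hη]
end

section
/- Let Kl(T) be Cppo-enriched with least elements ⊥ in hom-sets, C have an initial object 0, and suppose ⊥ · f♯ = ⊥ for every f : X → Y in C. Then tr_α := μx.(x·α) = ⋁_{n∈ℕ} ⊥ · αⁿ defines a fixed point operator Hom_{Kl(T)}(X,X) → Hom_{Kl(T)}(X,0) (tr_α · α = tr_α) that is uniform with respect to ♯ : C → Kl(T): if h♯ · α = β · h♯ for h : X → Y in C, then tr_β · h♯ = tr_α. -/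
/-!
STATEMENT 16: Let `Kl(T)` be Cppo-enriched (hom-sets are pointed ω-cpos and composition
is ω-continuous on both sides), let `C` have an initial object `0`, and suppose
`⊥ · f♯ = ⊥` for every `f : X ⟶ Y` in `C`.  Then `tr_α := μx.(x·α) = ⋁_{n∈ℕ} ⊥ · αⁿ`
defines a fixed point operator `Hom_{Kl(T)}(X,X) → Hom_{Kl(T)}(X,0)` (`tr_α · α = tr_α`,
and `tr_α` is the least fixed point of `x ↦ x·α`) that is uniform with respect to
`♯ : C → Kl(T)`: if `h♯ · α = β · h♯` for `h : X ⟶ Y` in `C`, then `tr_β · h♯ = tr_α`.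
-/

open CategoryTheory CategoryTheory.Limits OmegaCompletePartialOrder

variable {C : Type*} [Category C] (T : Monad C)

variable [∀ X Y : Kleisli T, OmegaCompletePartialOrder (X ⟶ Y)]
  [∀ X Y : Kleisli T, OrderBot (X ⟶ Y)]

/-- The ascending chain `n ↦ ⊥ · αⁿ` in `Hom_{Kl(T)}(X, 0)` (note `⊥ · α⁰ = ⊥` and
`⊥ · αⁿ⁺¹ = (⊥ · αⁿ) · α`, i.e. `α ≫ (⊥ · αⁿ)` in diagrammatic order). -/
noncomputable def traceChain [HasInitial C]
    (hpost : ∀ {X Y Z : Kleisli T} (f : X ⟶ Y), Monotone (fun g : Y ⟶ Z => f ≫ g))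
    {X : Kleisli T} (α : X ⟶ X) : Chain (X ⟶ kObj T (⊥_ C)) :=
  ⟨fun n => (fun c => α ≫ c)^[n] (⊥ : X ⟶ kObj T (⊥_ C)), by
    apply monotone_nat_of_le_succ
    intro n
    induction n with
    | zero => exact bot_le
    | succ n ih => rw [Function.iterate_succ', Function.iterate_succ']; exact hpost α ih⟩

theorem kleisli_least_fixed_point_is_uniform_trace_operator [HasInitial C]
    -- composition is ω-continuous (hence monotone) in each argument
    (hpost : ∀ {X Y Z : Kleisli T} (f : X ⟶ Y), Monotone (fun g : Y ⟶ Z => f ≫ g))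
    (hpre : ∀ {X Y Z : Kleisli T} (g : Y ⟶ Z), Monotone (fun f : X ⟶ Y => f ≫ g))
    (hpostCont : ∀ {X Y Z : Kleisli T} (f : X ⟶ Y) (c : Chain (Y ⟶ Z)),
      f ≫ ωSup c = ωSup (c.map ⟨fun g => f ≫ g, hpost f⟩))
    (hpreCont : ∀ {X Y Z : Kleisli T} (g : Y ⟶ Z) (c : Chain (X ⟶ Y)),
      ωSup c ≫ g = ωSup (c.map ⟨fun f => f ≫ g, hpre g⟩))
    -- `⊥ · f♯ = ⊥` for every morphism `f` of `C`
    (hbot : ∀ {X Y : C} (f : X ⟶ Y),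
      (Kleisli.Adjunction.toKleisli T).map f ≫ (⊥ : kObj T Y ⟶ kObj T (⊥_ C)) =
        (⊥ : kObj T X ⟶ kObj T (⊥_ C))) :
    -- `tr_α := ωSup (n ↦ ⊥ · αⁿ)` is the least fixed point of `x ↦ x · α` …
    (∀ {X : Kleisli T} (α : X ⟶ X),
      α ≫ ωSup (traceChain T hpost α) = ωSup (traceChain T hpost α)) ∧
    (∀ {X : Kleisli T} (α : X ⟶ X) (s : X ⟶ kObj T (⊥_ C)),
      α ≫ s = s → ωSup (traceChain T hpost α) ≤ s) ∧
    -- … and it is uniform w.r.t. `♯ : C → Kl(T)`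
    (∀ {X Y : C} (h : X ⟶ Y) (α : kObj T X ⟶ kObj T X) (β : kObj T Y ⟶ kObj T Y),
      α ≫ (Kleisli.Adjunction.toKleisli T).map h =
          (Kleisli.Adjunction.toKleisli T).map h ≫ β →
        (Kleisli.Adjunction.toKleisli T).map h ≫ ωSup (traceChain T hpost β) =
          ωSup (traceChain T hpost α)) := by
  refine ⟨?_, ?_, ?_⟩
  · intro X α
    rw [hpostCont α (traceChain T hpost α)]
    apply le_antisymm
    · apply ωSup_le
      intro n
      have : (traceChain T hpost α).map ⟨fun g => α ≫ g, hpost α⟩ n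
          = traceChain T hpost α (n + 1) :=
        (Function.iterate_succ_apply' (fun c => α ≫ c) n ⊥).symm
      rw [this]
      exact le_ωSup _ _
    · apply ωSup_le
      intro n
      calc traceChain T hpost α n ≤ traceChain T hpost α (n+1) :=
            (traceChain T hpost α).monotone (Nat.le_succ n)
        _ = (traceChain T hpost α).map ⟨fun g => α ≫ g, hpost α⟩ n :=
            Function.iterate_succ_apply' (fun c => α ≫ c) n ⊥
        _ ≤ _ := le_ωSup _ _
  · intro X α s hs
    apply ωSup_le
    intro n
    induction n with
    | zero => exact bot_le
    | succ n ih =>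
      show (fun c => α ≫ c)^[n+1] ⊥ ≤ s
      rw [Function.iterate_succ_apply']
      calc α ≫ (fun c => α ≫ c)^[n] ⊥ ≤ α ≫ s := hpost α ih
        _ = s := hs
  · intro X Y h α β hcomm
    rw [hpostCont]
    congr 1
    apply Chain.ext
    funext n
    simp only [Chain.map, OrderHom.comp_coe, OrderHom.coe_mk, Function.comp_apply]
    show (Kleisli.Adjunction.toKleisli T).map h ≫ (fun c => β ≫ c)^[n] ⊥
        = (fun c => α ≫ c)^[n] ⊥
    induction n with
    | zero => exact hbot h
    | succ n ih =>
      rw [Function.iterate_succ_apply', Function.iterate_succ_apply']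
      show _ ≫ β ≫ _ = α ≫ _
      exact ((Category.assoc _ _ _).symm.trans (congrArg (· ≫ _) hcomm.symm)).trans
        ((Category.assoc _ _ _).trans (congrArg (α ≫ ·) ih))
end

section
/- Let C be a category with binary coproducts and initial object, equipped with a uniform Conway operator (−)† : Hom(X, X+A) → Hom(X, A). Then for the exception monad M_A = Id + A on C, the operator tr_α = α† for α : X ⊸ X in Kl(M_A) (i.e., α : X → X+A in C) is a fixed point operator on Kl(M_A) (tr_α · α = tr_α in Kl(M_A)) that is uniform with respect to ♯ : C → Kl(M_A). -/
open CategoryTheory CategoryTheory.Limits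

theorem conway_gives_uniform_fixed_point_operator
    {C : Type*} [Category C] [HasBinaryCoproducts C] [HasInitial C] (A : C)
    -- the Conway operator
    (dag : ∀ {X : C}, (X ⟶ X ⨿ A) → (X ⟶ A))
    -- the Conway fixed-point (dinaturality) identity: `f† = [f†, id_A] ∘ f`
    (hfix : ∀ {X : C} (f : X ⟶ X ⨿ A), f ≫ coprod.desc (dag f) (𝟙 A) = dag f)
    -- uniformity of `(−)†` in `C`: if `(h + id_A) ∘ α = β ∘ h` then `β† ∘ h = α†`
    (hunif : ∀ {X Y : C} (h : X ⟶ Y) (α : X ⟶ X ⨿ A) (β : Y ⟶ Y ⨿ A),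
      α ≫ coprod.map h (𝟙 A) = h ≫ β → h ≫ dag β = dag α) :
    -- `tr_α := α† ≫ ι² : X ⊸ 0` is a fixed point: `tr_α · α = tr_α` in `Kl(M_A)`
    (∀ {X : C} (α : X ⟶ X ⨿ A),
      α ≫ coprod.desc (dag α ≫ (coprod.inr : A ⟶ (⊥_ C) ⨿ A)) coprod.inr =
        dag α ≫ (coprod.inr : A ⟶ (⊥_ C) ⨿ A)) ∧
    -- uniformity w.r.t. `♯ : C → Kl(M_A)`: if `h♯ · α = β · h♯` then `tr_β · h♯ = tr_α`
    (∀ {X Y : C} (h : X ⟶ Y) (α : X ⟶ X ⨿ A) (β : Y ⟶ Y ⨿ A),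
      α ≫ coprod.desc (h ≫ (coprod.inl : Y ⟶ Y ⨿ A)) coprod.inr =
          (h ≫ (coprod.inl : Y ⟶ Y ⨿ A)) ≫ coprod.desc β coprod.inr →
        (h ≫ (coprod.inl : Y ⟶ Y ⨿ A)) ≫
            coprod.desc (dag β ≫ (coprod.inr : A ⟶ (⊥_ C) ⨿ A)) coprod.inr =
          dag α ≫ (coprod.inr : A ⟶ (⊥_ C) ⨿ A)) := by
  constructor
  · intro X α
    have : coprod.desc (dag α ≫ (coprod.inr : A ⟶ (⊥_ C) ⨿ A)) coprod.inr =
        coprod.desc (dag α) (𝟙 A) ≫ coprod.inr := by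
      apply coprod.hom_ext <;> simp
    rw [this, ← Category.assoc, hfix]
  · intro X Y h α β hyp
    have h1 : α ≫ coprod.map h (𝟙 A) = h ≫ β := by
      have e : coprod.map h (𝟙 A) = coprod.desc (h ≫ coprod.inl) coprod.inr := by
        apply coprod.hom_ext
        · simp; exact (coprod.inl_desc _ _).symm
        · simp; exact (coprod.inr_desc _ _).symm
      rw [e, hyp]; simp; exact congrArg (h ≫ ·) (coprod.inl_desc _ _)
    have h2 := hunif h α β h1
    rw [Category.assoc, coprod.inl_desc, ← Category.assoc, h2]
end

section
/- For an ε-NA coalgebra α : X → P(Σ_ε × X + 1) regarded as a P(Σ* × Id + Σ*)-coalgebra α̲, the least fixed point trace tr_{α̲} = ⋁_n ⊥ · α̲ⁿ (Kleisli composition in the ε-NA monad) maps each state x to its classical accepted language: w ∈ tr_{α̲}(x) iff either w = ε and ✓ ∈ α(x), or w = a₁…a_n and there is a path from x using ε-steps interleaved with steps a₁,…,a_n ending in a state x' with ✓ ∈ α(x'). -/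
/-!
STATEMENT 18: For an ε-NA coalgebra `α : X → P(Σ_ε × X + 1)` regarded as a
`P(Σ* × Id + Σ*)`-coalgebra `α̲`, the least fixed point trace
`tr_{α̲} = ⋁_n ⊥ · α̲ⁿ` (Kleisli composition in the ε-NA monad) maps each state `x`
to its classical accepted language.  Here `Σ_ε = Σ + {ε}` is encoded as `Option A`
(`none` = `ε`), `Σ* = List A`, and `1 = Unit`.
-/

/-- Kleisli composition in the ε-NA monad `P(Σ* × Id + Σ*)`:
`(g·f)(x) = {(s₁s₂,z) | (s₁,y) ∈ f x, (s₂,z) ∈ g y} ∪ {s₁s₂ | (s₁,y) ∈ f x, s₂ ∈ g y}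
∪ {s₁ | s₁ ∈ f x}`. -/
def enaComp {A X Y Z : Type*} (g : Y → Set ((List A × Z) ⊕ List A))
    (f : X → Set ((List A × Y) ⊕ List A)) (x : X) : Set ((List A × Z) ⊕ List A) :=
  {r | (∃ (s₁ s₂ : List A) (y : Y) (z : Z),
          Sum.inl (s₁, y) ∈ f x ∧ Sum.inl (s₂, z) ∈ g y ∧ r = Sum.inl (s₁ ++ s₂, z)) ∨
       (∃ (s₁ s₂ : List A) (y : Y),
          Sum.inl (s₁, y) ∈ f x ∧ Sum.inr s₂ ∈ g y ∧ r = Sum.inr (s₁ ++ s₂)) ∨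
       (∃ s₁ : List A, Sum.inr s₁ ∈ f x ∧ r = Sum.inr s₁)}

/-- Kleisli powers of an endomorphism in the ε-NA monad; `α̲⁰` is the unit `x ↦ {(ε,x)}`. -/
def enaPow {A X : Type*} (α : X → Set ((List A × X) ⊕ List A)) :
    ℕ → (X → Set ((List A × X) ⊕ List A))
  | 0 => fun x => {Sum.inl ([], x)}
  | n + 1 => enaComp (enaPow α n) α

/-- The coalgebra `α̲ : X → P(Σ* × X + Σ*)` induced by an ε-NA `α : X → P(Σ_ε × X + 1)`:
visible steps become one-letter words, ε-steps become the empty word, and acceptance `✓`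
becomes the empty word in the `Σ*` summand. -/
def enaUnderline {A X : Type*} (α : X → Set ((Option A × X) ⊕ Unit)) (x : X) :
    Set ((List A × X) ⊕ List A) :=
  {r | (∃ (a : A) (y : X), Sum.inl (some a, y) ∈ α x ∧ r = Sum.inl ([a], y)) ∨
       (∃ y : X, Sum.inl (none, y) ∈ α x ∧ r = Sum.inl ([], y)) ∨
       (Sum.inr () ∈ α x ∧ r = Sum.inr [])}

/-- The least-fixed-point trace `tr_{α̲} = ⋁_n ⊥ · α̲ⁿ`:  composing `α̲ⁿ` with
`⊥ : X ⊸ 0` keeps exactly the `Σ*`-summand of `α̲ⁿ x`. -/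
def enaTrace {A X : Type*} (α : X → Set ((Option A × X) ⊕ Unit)) (x : X) : Set (List A) :=
  ⋃ n : ℕ, {s | Sum.inr s ∈ enaPow (enaUnderline α) n x}

/-- The classical accepted language of an ε-NA: `x` accepts `[]` if `✓ ∈ α x`, accepts `w`
via an ε-step keeping `w`, and accepts `a :: w` via an `a`-step to a state accepting `w`;
this is exactly "ε-steps interleaved with the letters of `w`, ending in a final state". -/
inductive ENAAccepts {A X : Type*} (α : X → Set ((Option A × X) ⊕ Unit)) :
    X → List A → Prop
  | final {x : X} : Sum.inr () ∈ α x → ENAAccepts α x []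
  | eps {x y : X} {w : List A} : Sum.inl (none, y) ∈ α x →
      ENAAccepts α y w → ENAAccepts α x w
  | step {x y : X} {a : A} {w : List A} : Sum.inl (some a, y) ∈ α x →
      ENAAccepts α y w → ENAAccepts α x (a :: w)

lemma enaPow_sound {A X : Type*} (α : X → Set ((Option A × X) ⊕ Unit)) :
    ∀ (n : ℕ) (x : X) (w : List A),
      Sum.inr w ∈ enaPow (enaUnderline α) n x → ENAAccepts α x w := by
  intro n
  induction n with
  | zero => intro x w h; simp [enaPow] at h
  | succ n ih =>
    intro x w h
    rcases h with ⟨s₁, s₂, y, z, h₁, _, h⟩ | ⟨s₁, s₂, y, h₁, h₂, h⟩ | ⟨s₁, h₁, h⟩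
    · exact absurd h (by simp)
    · injection h with h; subst h
      rcases h₁ with ⟨a, y', ha, he⟩ | ⟨y', ha, he⟩ | ⟨_, he⟩
      · injection he with he; injection he with h1 h2; subst h1; subst h2
        exact ENAAccepts.step ha (ih _ _ h₂)
      · injection he with he; injection he with h1 h2; subst h1; subst h2
        exact ENAAccepts.eps ha (ih _ _ h₂)
      · exact absurd he (by simp)
    · injection h with h; subst h
      rcases h₁ with ⟨a, y', _, he⟩ | ⟨y', _, he⟩ | ⟨hf, he⟩
      · exact absurd he (by simp)
      · exact absurd he (by simp)
      · injection he with he; subst he; exact ENAAccepts.final hf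

lemma enaPow_complete {A X : Type*} (α : X → Set ((Option A × X) ⊕ Unit))
    {x : X} {w : List A} (h : ENAAccepts α x w) :
    ∃ n, Sum.inr w ∈ enaPow (enaUnderline α) n x := by
  induction h with
  | @final x hf =>
    exact ⟨1, Or.inr (Or.inr ⟨[], Or.inr (Or.inr ⟨hf, rfl⟩), rfl⟩)⟩
  | @eps x y w ha _ ih =>
    obtain ⟨n, hn⟩ := ih
    exact ⟨n + 1, Or.inr (Or.inl ⟨[], w, y, Or.inr (Or.inl ⟨y, ha, rfl⟩), hn, rfl⟩)⟩
  | @step x y a w ha _ ih =>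
    obtain ⟨n, hn⟩ := ih
    exact ⟨n + 1, Or.inr (Or.inl ⟨[a], w, y, Or.inl ⟨a, y, ha, rfl⟩, hn, rfl⟩)⟩

theorem ena_trace_is_accepted_language {A X : Type*}
    (α : X → Set ((Option A × X) ⊕ Unit)) (x : X) (w : List A) :
    w ∈ enaTrace α x ↔ ENAAccepts α x w := by
  constructor
  · intro h
    simp only [enaTrace, Set.mem_iUnion, Set.mem_setOf_eq] at h
    obtain ⟨n, hn⟩ := h
    exact enaPow_sound α n x w hn
  · intro h
    obtain ⟨n, hn⟩ := enaPow_complete α h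
    exact Set.mem_iUnion.2 ⟨n, hn⟩
end
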